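/- Let α, β ∈ (0,1), let k, k₀, k₁, b₂ ∈ ℝ with k ≠ 0, and set a₁ = b₂/(2k). Then u(x,t) = k₀ + k₁ E_α(-(b₂/2) k k₀ t^α) E_β(k x^β) is an exact solution of the nonlinear time-space fractional diffusion–convection equation: for all x > 0 and t > 0, (C_t^α u)(x,t) = a₁ ((C_x^β u)(x,t))² + a₁ u (C_x^β (C_x^β u))(x,t) - b₂ u (C_x^β u)(x,t), where u = u(x,t). -/

import Mathlib

/-- The two-parameter Mittag-Leffler function `E_{β,γ}(z) = Σ_{r=0}^∞ z^r / Γ(βr + γ)`. -/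
noncomputable def mittagLeffler (β γ z : ℝ) : ℝ :=
  ∑' r : ℕ, z ^ r / Real.Gamma (β * r + γ)

/-- Caputo fractional partial derivative of order `α` with respect to `t`. -/
noncomputable def caputoT (α : ℝ) (u : ℝ → ℝ → ℝ) : ℝ → ℝ → ℝ := fun x t =>
  (1 / Real.Gamma (1 - α)) * ∫ s in (0:ℝ)..t, deriv (fun s' => u x s') s * (t - s) ^ (-α)

/-- Caputo fractional partial derivative of order `β` with respect to `x`. -/
noncomputable def caputoX (β : ℝ) (u : ℝ → ℝ → ℝ) : ℝ → ℝ → ℝ := fun x t =>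
  (1 / Real.Gamma (1 - β)) * ∫ y in (0:ℝ)..x, deriv (fun y' => u y' t) y * (x - y) ^ (-β)

/-- The exact solution `u(x,t) = k₀ + k₁ E_α(-(b₂/2) k k₀ t^α) E_β(k x^β)`. -/
noncomputable def uSol (α β k k₀ k₁ b₂ : ℝ) : ℝ → ℝ → ℝ := fun x t =>
  k₀ + k₁ * mittagLeffler α 1 (-(b₂ / 2) * k * k₀ * t ^ α) * mittagLeffler β 1 (k * x ^ β)

section CaputoMLAux
open Real MeasureTheory Set Filter

lemma gamma_step {γ c : ℝ} (hγ : 0 < γ) (hc : 0 < c) {N : ℕ} (hN : 2 ≤ γ * N) (m : ℕ) :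
    (γ * m + c) * (γ * m + c + 1) * Real.Gamma (γ * m + c)
      ≤ Real.Gamma (γ * (m + N : ℕ) + c) := by
  have h1 : (0:ℝ) < γ * m + c := by positivity
  have h2 : Real.Gamma (γ * m + c + 2) = (γ * m + c + 1) * ((γ * m + c) * Real.Gamma (γ * m + c)) := by
    rw [show γ * m + c + 2 = (γ * m + c + 1) + 1 by ring, Real.Gamma_add_one (by positivity),
      Real.Gamma_add_one h1.ne']
  have hm0 : (0:ℝ) ≤ γ * m := by positivity
  have hle : γ * m + c + 2 ≤ γ * (m + N : ℕ) + c := by push_cast; nlinarith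
  have h3 : Real.Gamma (γ * m + c + 2) ≤ Real.Gamma (γ * (m + N : ℕ) + c) :=
    Real.Gamma_strictMonoOn_Ici.monotoneOn (by simp only [mem_Ici]; linarith)
      (by simp only [mem_Ici]; linarith) hle
  calc (γ * m + c) * (γ * m + c + 1) * Real.Gamma (γ * m + c)
      = Real.Gamma (γ * m + c + 2) := by rw [h2]; ring
    _ ≤ _ := h3

lemma summable_aux {γ c : ℝ} (hγ : 0 < γ) (hc : 0 < c) (A : ℝ) :
    Summable (fun r : ℕ => ((r:ℝ) + 1) * |A| ^ r / Real.Gamma (γ * r + c)) := by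
  set f : ℕ → ℝ := fun r => ((r:ℝ) + 1) * |A| ^ r / Real.Gamma (γ * r + c) with hf
  have hGpos : ∀ r : ℕ, 0 < Real.Gamma (γ * r + c) := fun r =>
    Real.Gamma_pos_of_pos (by positivity)
  have hfnn : ∀ r, 0 ≤ f r := fun r => by
    have := (hGpos r).le; positivity
  rcases eq_or_ne A 0 with hA | hA
  · apply summable_of_ne_finset_zero (s := {0})
    intro r hr
    simp only [Finset.mem_singleton] at hr
    simp [hf, hA, zero_pow hr]
  have hApos : 0 < |A| := abs_pos.mpr hA
  -- choose stride N with γ N ≥ 2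
  obtain ⟨N, hN⟩ : ∃ N : ℕ, 2 ≤ γ * N := by
    refine ⟨⌈(2:ℝ)/γ⌉₊, ?_⟩
    have h1 : (2:ℝ)/γ ≤ ⌈(2:ℝ)/γ⌉₊ := Nat.le_ceil _
    calc (2:ℝ) = γ * (2/γ) := by field_simp
      _ ≤ γ * ⌈(2:ℝ)/γ⌉₊ := by nlinarith
  have hNpos : 0 < N := by
    rcases Nat.eq_zero_or_pos N with h | h
    · exfalso; rw [h] at hN; norm_num at hN
    · exact h
  haveI : NeZero N := ⟨hNpos.ne'⟩
  -- choose threshold M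
  set B : ℝ := 2 * ((N:ℝ) + 1) * |A| ^ N with hB
  have hBpos : 0 < B := by positivity
  obtain ⟨M, hM⟩ : ∃ M : ℕ, ∀ m : ℕ, M ≤ m → B ≤ (γ * m + c) * (γ * m + c + 1) := by
    refine ⟨⌈B/γ⌉₊, fun m hm => ?_⟩
    have h1 : (B:ℝ)/γ ≤ ⌈B/γ⌉₊ := Nat.le_ceil _
    have h2 : ((⌈B/γ⌉₊ : ℕ):ℝ) ≤ m := Nat.cast_le.mpr hm
    have h3 : B ≤ γ * m := by
      calc B = γ * (B/γ) := by field_simp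
        _ ≤ γ * m := by nlinarith
    nlinarith [mul_pos hγ (Nat.cast_pos.mpr hNpos), hc]
  -- key step inequality
  have key : ∀ m : ℕ, M ≤ m → f (m + N) ≤ (1/2) * f m := by
    intro m hm
    have hG1 := hGpos m
    have hG2 := hGpos (m + N)
    have hstep := gamma_step hγ hc hN m
    have hprod : B ≤ (γ * m + c) * (γ * m + c + 1) := hM m hm
    have hm1 : (0:ℝ) < γ * m + c := by positivity
    have hmono : ((m:ℝ) + N + 1) ≤ ((N:ℝ) + 1) * ((m:ℝ) + 1) := by
      nlinarith [Nat.cast_nonneg (α := ℝ) m, Nat.cast_nonneg (α := ℝ) N]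
    have hAm : (0:ℝ) < |A| ^ m := by positivity
    have hAN : (0:ℝ) < |A| ^ N := by positivity
    have hnum : ((m:ℝ) + N + 1) * (|A| ^ m * |A| ^ N) * Real.Gamma (γ * m + c)
        ≤ 1/2 * (((m:ℝ) + 1) * |A| ^ m) * Real.Gamma (γ * (m + N : ℕ) + c) := by
      have e1 : ((m:ℝ) + N + 1) * (|A| ^ m * |A| ^ N) * Real.Gamma (γ * m + c)
          ≤ ((N:ℝ) + 1) * ((m:ℝ) + 1) * (|A| ^ m * |A| ^ N) * Real.Gamma (γ * m + c) :=
        mul_le_mul_of_nonneg_right (mul_le_mul_of_nonneg_right hmono (by positivity)) hG1.le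
      have hBg : B * Real.Gamma (γ * m + c) ≤ Real.Gamma (γ * (m + N : ℕ) + c) := by
        refine le_trans ?_ hstep
        nlinarith
      have e2 : 1/2 * (((m:ℝ) + 1) * |A| ^ m) * (B * Real.Gamma (γ * m + c))
          ≤ 1/2 * (((m:ℝ) + 1) * |A| ^ m) * Real.Gamma (γ * (m + N : ℕ) + c) := by
        have hpos2 : (0:ℝ) < 1/2 * (((m:ℝ) + 1) * |A| ^ m) := by positivity
        nlinarith
      have e3 : ((N:ℝ) + 1) * ((m:ℝ) + 1) * (|A| ^ m * |A| ^ N) * Real.Gamma (γ * m + c)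
          = 1/2 * (((m:ℝ) + 1) * |A| ^ m) * (B * Real.Gamma (γ * m + c)) := by
        rw [hB]; ring
      linarith
    have goal2 : ((((m + N : ℕ)):ℝ) + 1) * |A| ^ (m + N) / Real.Gamma (γ * (m + N : ℕ) + c)
        ≤ (1/2 * (((m:ℝ) + 1) * |A| ^ m)) / Real.Gamma (γ * m + c) := by
      rw [div_le_div_iff₀ hG2 hG1]
      calc ((((m + N : ℕ)):ℝ) + 1) * |A| ^ (m + N) * Real.Gamma (γ * m + c)
          = ((m:ℝ) + N + 1) * (|A| ^ m * |A| ^ N) * Real.Gamma (γ * m + c) := by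
            push_cast [pow_add]; ring
        _ ≤ 1/2 * (((m:ℝ) + 1) * |A| ^ m) * Real.Gamma (γ * (m + N : ℕ) + c) := hnum
    calc f (m + N) = ((((m + N : ℕ)):ℝ) + 1) * |A| ^ (m + N) / Real.Gamma (γ * (m + N : ℕ) + c) := rfl
      _ ≤ (1/2 * (((m:ℝ) + 1) * |A| ^ m)) / Real.Gamma (γ * m + c) := goal2
      _ = 1/2 * f m := by rw [hf]; ring
  -- subseries are summable
  have hsub : ∀ j : Fin N, Summable (fun n : ℕ => f (n * N + j)) := by
    intro j
    apply summable_of_ratio_norm_eventually_le (r := 1/2) (by norm_num)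
    filter_upwards [eventually_ge_atTop M] with n hn
    have hm : M ≤ n * N + (j:ℕ) :=
      le_trans hn (le_trans (Nat.le_mul_of_pos_right n hNpos) (Nat.le_add_right _ _))
    have harith : (n + 1) * N + (j:ℕ) = (n * N + (j:ℕ)) + N := by ring
    rw [harith, Real.norm_of_nonneg (hfnn _), Real.norm_of_nonneg (hfnn _)]
    exact key _ hm
  have hcomp : Summable (f ∘ (Nat.divModEquiv N).symm) := by
    apply (summable_prod_of_nonneg (fun p => hfnn _)).2
    refine ⟨fun n => ⟨_, hasSum_fintype _⟩, ?_⟩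
    have heq : (fun n : ℕ => ∑' j : Fin N, f ((Nat.divModEquiv N).symm (n, j)))
        = fun n : ℕ => ∑ j : Fin N, f (n * N + j) := by
      funext n
      rw [tsum_fintype]
      apply Finset.sum_congr rfl
      intro j _
      simp [Nat.divModEquiv]
    show Summable fun n : ℕ => ∑' j : Fin N, f ((Nat.divModEquiv N).symm (n, j))
    rw [heq]
    exact summable_sum (fun j _ => hsub j)
  exact ((Nat.divModEquiv N).symm.summable_iff).mp hcomp

lemma gamma_arg_pos {γ : ℝ} (hγ : 0 < γ) (r : ℕ) : (0:ℝ) < Real.Gamma (γ * r + 1) :=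
  Real.Gamma_pos_of_pos (by positivity)

lemma ML_summable {γ : ℝ} (hγ : 0 < γ) (z : ℝ) :
    Summable (fun r : ℕ => z ^ r / Real.Gamma (γ * r + 1)) := by
  apply Summable.of_norm_bounded (summable_aux hγ one_pos z)
  intro r
  have hG := gamma_arg_pos hγ r
  rw [norm_div, Real.norm_of_nonneg hG.le, norm_pow, Real.norm_eq_abs]
  gcongr
  nlinarith [pow_nonneg (abs_nonneg z) r, Nat.cast_nonneg (α := ℝ) r]

lemma ML_deriv_summable {γ : ℝ} (hγ : 0 < γ) (R : ℝ) (hR : 1 ≤ R) :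
    Summable (fun r : ℕ => (r:ℝ) * R ^ (r-1) / Real.Gamma (γ * r + 1)) := by
  apply Summable.of_norm_bounded (summable_aux hγ one_pos R)
  intro r
  have hG := gamma_arg_pos hγ r
  have hR0 : (0:ℝ) ≤ R := le_trans zero_le_one hR
  rw [norm_div, Real.norm_of_nonneg hG.le]
  rw [Real.norm_eq_abs, abs_of_nonneg (by positivity : (0:ℝ) ≤ (r:ℝ) * R ^ (r-1)), abs_of_nonneg hR0]
  have h1 : R ^ (r-1) ≤ R ^ r := pow_le_pow_right₀ hR (Nat.sub_le r 1)
  have h2 : (0:ℝ) ≤ R ^ (r-1) := by positivity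
  have h3 : (0:ℝ) ≤ R ^ r := by positivity
  gcongr ?_ / _
  nlinarith [Nat.cast_nonneg (α := ℝ) r]

lemma ML_g_hasDerivAt {γ : ℝ} (hγ : 0 < γ) (z : ℝ) :
    HasDerivAt (fun w => mittagLeffler γ 1 w)
      (∑' r : ℕ, (r:ℝ) * z ^ (r-1) / Real.Gamma (γ * r + 1)) z := by
  have hz1 : (0:ℝ) ≤ |z| := abs_nonneg z
  have hball : z ∈ Metric.ball (0:ℝ) (|z|+1) := by
    simp only [Metric.mem_ball, dist_zero_right, Real.norm_eq_abs]; linarith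
  have hu : Summable (fun r : ℕ => (r:ℝ) * (|z|+1) ^ (r-1) / Real.Gamma (γ * r + 1)) :=
    ML_deriv_summable hγ _ (by linarith)
  have key := hasDerivAt_tsum_of_isPreconnected hu (Metric.isOpen_ball)
    ((convex_ball (0:ℝ) (|z|+1)).isPreconnected)
    (g := fun (r : ℕ) (w : ℝ) => w ^ r / Real.Gamma (γ * r + 1))
    (g' := fun (r : ℕ) (w : ℝ) => (r:ℝ) * w ^ (r-1) / Real.Gamma (γ * r + 1))
    (fun n w _ => (hasDerivAt_pow n w).div_const (Real.Gamma (γ * n + 1)))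
    (fun n w hw => ?_) hball (ML_summable hγ z) hball
  · exact key
  · have hG := gamma_arg_pos hγ n
    rw [norm_div, Real.norm_of_nonneg hG.le, norm_mul, norm_pow, Real.norm_eq_abs,
      Real.norm_eq_abs, abs_of_nonneg (Nat.cast_nonneg n)]
    gcongr ?_ / _
    have hwle : |w| ≤ |z| + 1 := by
      rw [Metric.mem_ball, dist_zero_right, Real.norm_eq_abs] at hw; linarith
    exact mul_le_mul_of_nonneg_left (pow_le_pow_left₀ (abs_nonneg w) hwle _) (Nat.cast_nonneg n)

lemma ML_g_deriv_shift {γ : ℝ} (hγ : 0 < γ) (z : ℝ) :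
    (∑' r : ℕ, (r:ℝ) * z ^ (r-1) / Real.Gamma (γ * r + 1))
      = ∑' r : ℕ, ((r:ℝ) + 1) * z ^ r / Real.Gamma (γ * ((r:ℝ) + 1) + 1) := by
  have hs : Summable (fun r : ℕ => (r:ℝ) * z ^ (r-1) / Real.Gamma (γ * r + 1)) := by
    apply Summable.of_norm_bounded (ML_deriv_summable hγ (|z|+1) (by linarith [abs_nonneg z]))
    intro r
    have hG := gamma_arg_pos hγ r
    rw [norm_div, Real.norm_of_nonneg hG.le, norm_mul, norm_pow, Real.norm_eq_abs,
      Real.norm_eq_abs, abs_of_nonneg (Nat.cast_nonneg r)]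
    gcongr ?_ / _
    exact mul_le_mul_of_nonneg_left (pow_le_pow_left₀ (abs_nonneg z) (by linarith [abs_nonneg z]) _)
      (Nat.cast_nonneg r)
  rw [Summable.tsum_eq_zero_add hs]
  simp only [Nat.cast_zero, zero_mul, zero_div, zero_add]
  apply tsum_congr
  intro r
  have : (r + 1) - 1 = r := by omega
  rw [this]
  push_cast
  ring_nf

lemma E_hasDerivAt {γ : ℝ} (hγ : 0 < γ) (lam : ℝ) {s : ℝ} (hs : 0 < s) :
    HasDerivAt (fun s' => mittagLeffler γ 1 (lam * s' ^ γ))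
      ((∑' r : ℕ, ((r:ℝ) + 1) * (lam * s ^ γ) ^ r / Real.Gamma (γ * ((r:ℝ) + 1) + 1))
        * (lam * (γ * s ^ (γ - 1)))) s := by
  have h1 : HasDerivAt (fun s' : ℝ => lam * s' ^ γ) (lam * (γ * s ^ (γ - 1))) s :=
    (Real.hasDerivAt_rpow_const (Or.inl hs.ne')).const_mul lam
  have h2 := (ML_g_hasDerivAt hγ (lam * s ^ γ)).comp s h1
  rw [ML_g_deriv_shift hγ] at h2
  exact h2

lemma beta_cont {a b t : ℝ} (ht : 0 < t) :
    ContinuousOn (fun s : ℝ => s ^ (a-1) * (t-s) ^ (b-1)) (Ioo 0 t) := by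
  apply ContinuousOn.mul
  · exact continuousOn_id.rpow_const (fun x hx => Or.inl (ne_of_gt hx.1))
  · exact (continuousOn_const.sub continuousOn_id).rpow_const
      (fun x hx => Or.inl (by
        simp only [mem_Ioo] at hx
        simp only [Pi.sub_apply, id_eq]
        intro h
        linarith [sub_eq_zero.mp h]))

lemma beta_integrableOn {a b t : ℝ} (ha : 0 < a) (hb : 0 < b) (ht : 0 < t) :
    IntegrableOn (fun s : ℝ => s ^ (a-1) * (t-s) ^ (b-1)) (Ioo 0 t) := by
  set f : ℝ → ℝ := fun s => s ^ (a-1) * (t-s) ^ (b-1) with hfdef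
  have ht2 : 0 < t/2 := by linarith
  have hsub1 : Ioc 0 (t/2) ⊆ Ioo 0 t := fun s hs => ⟨hs.1, by simp only [mem_Ioc] at hs; linarith [hs.2]⟩
  have hsub2 : Ioo (t/2) t ⊆ Ioo 0 t := fun s hs => ⟨by simp only [mem_Ioo] at hs; linarith [hs.1], hs.2⟩
  have p1 : IntegrableOn f (Ioc 0 (t/2)) := by
    have hint : IntegrableOn (fun s : ℝ => s ^ (a-1)) (Ioc 0 (t/2)) := by
      have h := intervalIntegral.intervalIntegrable_rpow' (a := 0) (b := t/2) (r := a-1)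
        (by linarith)
      rwa [intervalIntegrable_iff_integrableOn_Ioc_of_le ht2.le] at h
    set C : ℝ := (t/2) ^ (b-1) + t ^ (b-1) with hC
    apply Integrable.mono' (hint.const_mul C)
    · exact ((beta_cont ht).mono hsub1).aestronglyMeasurable measurableSet_Ioc
    · refine (ae_restrict_iff' measurableSet_Ioc).2 (ae_of_all _ fun s hs => ?_)
      simp only [mem_Ioc] at hs
      have h1 : (0:ℝ) ≤ s ^ (a-1) := Real.rpow_nonneg hs.1.le _
      have h2 : (0:ℝ) ≤ (t-s) ^ (b-1) := Real.rpow_nonneg (by linarith [hs.2]) _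
      rw [Real.norm_of_nonneg (mul_nonneg h1 h2)]
      have hts : (t-s) ^ (b-1) ≤ C := by
        rcases le_or_gt 0 (b-1) with h | h
        · have : (t-s) ^ (b-1) ≤ t ^ (b-1) :=
            Real.rpow_le_rpow (by linarith [hs.2]) (by linarith [hs.1]) h
          have : (0:ℝ) ≤ (t/2) ^ (b-1) := Real.rpow_nonneg ht2.le _
          rw [hC]; linarith
        · have : (t-s) ^ (b-1) ≤ (t/2) ^ (b-1) :=
            Real.rpow_le_rpow_of_nonpos ht2 (by linarith [hs.2]) h.le
          have : (0:ℝ) ≤ t ^ (b-1) := Real.rpow_nonneg ht.le _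
          rw [hC]; linarith
      calc s ^ (a-1) * (t-s) ^ (b-1) ≤ s ^ (a-1) * C := mul_le_mul_of_nonneg_left hts h1
        _ = C * s ^ (a-1) := mul_comm _ _
  have p2 : IntegrableOn f (Ioo (t/2) t) := by
    have hint : IntegrableOn (fun s : ℝ => (t-s) ^ (b-1)) (Ioc (t/2) t) := by
      have h := intervalIntegral.intervalIntegrable_rpow' (a := 0) (b := t/2) (r := b-1)
        (by linarith)
      have h2 := h.comp_sub_left t
      rw [sub_zero, show t - t/2 = t/2 by ring] at h2
      have h3 := h2.symm
      rwa [intervalIntegrable_iff_integrableOn_Ioc_of_le (by linarith)] at h3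
    set C : ℝ := (t/2) ^ (a-1) + t ^ (a-1) with hC
    apply Integrable.mono' ((hint.mono_set Ioo_subset_Ioc_self).const_mul C)
    · exact ((beta_cont ht).mono hsub2).aestronglyMeasurable measurableSet_Ioo
    · refine (ae_restrict_iff' measurableSet_Ioo).2 (ae_of_all _ fun s hs => ?_)
      simp only [mem_Ioo] at hs
      have hs0 : (0:ℝ) < s := by linarith [hs.1]
      have h1 : (0:ℝ) ≤ s ^ (a-1) := Real.rpow_nonneg hs0.le _
      have h2 : (0:ℝ) ≤ (t-s) ^ (b-1) := Real.rpow_nonneg (by linarith [hs.2]) _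
      rw [Real.norm_of_nonneg (mul_nonneg h1 h2)]
      have hts : s ^ (a-1) ≤ C := by
        rcases le_or_gt 0 (a-1) with h | h
        · have : s ^ (a-1) ≤ t ^ (a-1) := Real.rpow_le_rpow hs0.le hs.2.le h
          have : (0:ℝ) ≤ (t/2) ^ (a-1) := Real.rpow_nonneg ht2.le _
          rw [hC]; linarith
        · have : s ^ (a-1) ≤ (t/2) ^ (a-1) :=
            Real.rpow_le_rpow_of_nonpos ht2 hs.1.le h.le
          have : (0:ℝ) ≤ t ^ (a-1) := Real.rpow_nonneg ht.le _
          rw [hC]; linarith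
      exact mul_le_mul_of_nonneg_right hts h2
  apply IntegrableOn.mono_set (p1.union p2)
  intro s hs
  rcases le_or_gt s (t/2) with h | h
  · exact Or.inl ⟨hs.1, h⟩
  · exact Or.inr ⟨h, hs.2⟩

lemma beta_value {a b t : ℝ} (ha : 0 < a) (hb : 0 < b) (ht : 0 < t) :
    ∫ s in Ioo 0 t, s ^ (a-1) * (t-s) ^ (b-1)
      = Real.Gamma a * Real.Gamma b / Real.Gamma (a+b) * t ^ (a+b-1) := by
  have hGab : Real.Gamma (a+b) ≠ 0 := (Real.Gamma_pos_of_pos (by linarith)).ne'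
  have hβ : Complex.betaIntegral a b
      = (Real.Gamma a * Real.Gamma b / Real.Gamma (a+b) : ℝ) := by
    have h1 := Complex.Gamma_mul_Gamma_eq_betaIntegral
      (s := (a:ℂ)) (t := (b:ℂ)) (by simpa using ha) (by simpa using hb)
    have h2 : ((a:ℂ) + b) = ((a + b : ℝ) : ℂ) := by push_cast; ring
    rw [h2, Complex.Gamma_ofReal, Complex.Gamma_ofReal, Complex.Gamma_ofReal] at h1
    have h3 : ((Real.Gamma (a+b) : ℂ)) ≠ 0 := by
      simpa using hGab
    rw [Complex.ofReal_div, Complex.ofReal_mul, eq_div_iff h3]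
    linear_combination -h1
  have hscaled := Complex.betaIntegral_scaled (a:ℂ) (b:ℂ) ht
  have hcongr : ∀ x ∈ Icc (0:ℝ) t,
      (x:ℂ) ^ ((a:ℂ) - 1) * ((t:ℂ) - x) ^ ((b:ℂ) - 1)
        = ((x ^ (a-1) * (t-x) ^ (b-1) : ℝ) : ℂ) := by
    intro x hx
    rw [Complex.ofReal_mul, Complex.ofReal_cpow hx.1, Complex.ofReal_cpow (by linarith [hx.2] : (0:ℝ) ≤ t - x)]
    push_cast
    ring
  have hint : (∫ x in (0:ℝ)..t, (x:ℂ) ^ ((a:ℂ) - 1) * ((t:ℂ) - x) ^ ((b:ℂ) - 1))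
      = ((∫ x in (0:ℝ)..t, x ^ (a-1) * (t-x) ^ (b-1) : ℝ) : ℂ) := by
    rw [← intervalIntegral.integral_ofReal]
    apply intervalIntegral.integral_congr
    intro x hx
    rw [uIcc_of_le ht.le] at hx
    exact hcongr x hx
  have htpow : ((t:ℂ)) ^ ((a:ℂ) + b - 1) = ((t ^ (a+b-1) : ℝ) : ℂ) := by
    rw [Complex.ofReal_cpow ht.le]
    push_cast
    ring_nf
  have key : ((∫ x in (0:ℝ)..t, x ^ (a-1) * (t-x) ^ (b-1) : ℝ) : ℂ)
      = ((Real.Gamma a * Real.Gamma b / Real.Gamma (a+b) * t ^ (a+b-1) : ℝ) : ℂ) := by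
    rw [← hint, hscaled, hβ, htpow, ← Complex.ofReal_mul, Complex.ofReal_inj]
    ring
  have key2 : (∫ x in (0:ℝ)..t, x ^ (a-1) * (t-x) ^ (b-1))
      = Real.Gamma a * Real.Gamma b / Real.Gamma (a+b) * t ^ (a+b-1) :=
    Complex.ofReal_inj.mp key
  rw [← key2, intervalIntegral.integral_of_le ht.le, integral_Ioc_eq_integral_Ioo]

lemma c_beta_simplify {γ : ℝ} (hγ0 : 0 < γ) (hγ1 : γ < 1) {t : ℝ} (ht : 0 < t) (L : ℝ) (r : ℕ) :
    (L^(r+1) * (γ*((r:ℝ)+1)) / Real.Gamma (γ*((r:ℝ)+1)+1)) *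
      (Real.Gamma (γ*((r:ℝ)+1)) * Real.Gamma (1-γ) / Real.Gamma (γ*((r:ℝ)+1)+(1-γ))
        * t ^ (γ*((r:ℝ)+1)+(1-γ)-1))
    = L * Real.Gamma (1-γ) * ((L*t^γ)^r / Real.Gamma (γ*(r:ℝ)+1)) := by
  have ha : (0:ℝ) < γ*((r:ℝ)+1) := by positivity
  have hG : Real.Gamma (γ*((r:ℝ)+1)+1) = (γ*((r:ℝ)+1)) * Real.Gamma (γ*((r:ℝ)+1)) :=
    Real.Gamma_add_one ha.ne'
  have he1 : γ*((r:ℝ)+1)+(1-γ) = γ*(r:ℝ)+1 := by ring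
  have he2 : γ*((r:ℝ)+1)+(1-γ)-1 = γ*(r:ℝ) := by ring
  have ht2 : t^(γ*(r:ℝ)) = (t^γ)^r := by
    rw [← Real.rpow_natCast (t^γ) r, ← Real.rpow_mul ht.le]
  have hpw : (L*t^γ)^r = L^r * (t^γ)^r := mul_pow _ _ _
  have hLp : L^(r+1) = L^r * L := pow_succ _ _
  have hGa : Real.Gamma (γ*((r:ℝ)+1)) ≠ 0 := (Real.Gamma_pos_of_pos ha).ne'
  have hGb : Real.Gamma (γ*(r:ℝ)+1) ≠ 0 := (Real.Gamma_pos_of_pos (by positivity)).ne'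
  rw [he2, he1, hG, ht2, hpw, hLp]
  field_simp

lemma caputo_core {γ : ℝ} (hγ : γ ∈ Set.Ioo (0:ℝ) 1) (lam : ℝ) {t : ℝ} (ht : 0 < t) :
    (1 / Real.Gamma (1 - γ)) * ∫ s in (0:ℝ)..t,
      deriv (fun s' => mittagLeffler γ 1 (lam * s' ^ γ)) s * (t - s) ^ (-γ)
    = lam * mittagLeffler γ 1 (lam * t ^ γ) := by
  obtain ⟨hγ0, hγ1⟩ := hγ
  have hb : (0:ℝ) < 1 - γ := by linarith
  have hGb : Real.Gamma (1-γ) ≠ 0 := (Real.Gamma_pos_of_pos hb).ne'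
  set c : ℕ → ℝ := fun r => lam^(r+1) * (γ*((r:ℝ)+1)) / Real.Gamma (γ*((r:ℝ)+1)+1) with hc
  set F : ℕ → ℝ → ℝ := fun r s => c r * (s ^ (γ*((r:ℝ)+1)-1) * (t-s) ^ (-γ)) with hF
  have har : ∀ r : ℕ, (0:ℝ) < γ*((r:ℝ)+1) := fun r => by positivity
  -- pointwise expansion of the integrand on Ioo 0 t
  have hpt : ∀ s ∈ Ioo (0:ℝ) t,
      deriv (fun s' => mittagLeffler γ 1 (lam * s' ^ γ)) s * (t - s) ^ (-γ) = ∑' r, F r s := by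
    intro s hs
    rw [(E_hasDerivAt hγ0 lam hs.1).deriv, ← tsum_mul_right, ← tsum_mul_right]
    apply tsum_congr
    intro r
    rw [hF, hc]
    simp only
    have h1 : (lam * s ^ γ) ^ r = lam ^ r * s ^ (γ*(r:ℝ)) := by
      rw [mul_pow, ← Real.rpow_natCast (s^γ) r, ← Real.rpow_mul hs.1.le]
    have h2 : s ^ (γ*((r:ℝ)+1)-1) = s ^ (γ*(r:ℝ)) * s ^ (γ-1) := by
      rw [← Real.rpow_add hs.1]; ring_nf
    rw [h1, h2, pow_succ]
    have hGr : Real.Gamma (γ*((r:ℝ)+1)+1) ≠ 0 := (Real.Gamma_pos_of_pos (by positivity)).ne'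
    field_simp
  -- each F r is integrable on Ioo 0 t
  have hint : ∀ r : ℕ, IntegrableOn (F r) (Ioo 0 t) := by
    intro r
    have h := (beta_integrableOn (a := γ*((r:ℝ)+1)) (b := 1-γ) (har r) hb ht).const_mul (c r)
    simp only [show (1:ℝ)-γ-1 = -γ from by ring] at h
    exact h
  -- the integrals of the norms
  have hnorm : ∀ r : ℕ, ∫ s in Ioo (0:ℝ) t, ‖F r s‖
      = |lam| * Real.Gamma (1-γ) * ((|lam| * t ^ γ)^r / Real.Gamma (γ*(r:ℝ)+1)) := by
    intro r
    have heq : EqOn (fun s => ‖F r s‖)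
        (fun s => |c r| * (s ^ (γ*((r:ℝ)+1)-1) * (t-s) ^ ((1-γ)-1))) (Ioo 0 t) := by
      intro s hs
      simp only [hF, norm_mul, Real.norm_eq_abs]
      rw [abs_of_nonneg (Real.rpow_nonneg hs.1.le _),
        abs_of_nonneg (Real.rpow_nonneg (by linarith [hs.2] : (0:ℝ) ≤ t - s) _)]
      norm_num
    rw [setIntegral_congr_fun measurableSet_Ioo heq, integral_const_mul,
      beta_value (har r) hb ht]
    have habs : |c r| = |lam|^(r+1) * (γ*((r:ℝ)+1)) / Real.Gamma (γ*((r:ℝ)+1)+1) := by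
      rw [hc]
      simp only
      rw [abs_div, abs_mul, abs_pow]
      rw [abs_of_pos (har r), abs_of_pos (Real.Gamma_pos_of_pos (by positivity))]
    rw [habs]
    exact c_beta_simplify hγ0 hγ1 ht (|lam|) r
  -- summability of the integrals of norms
  have hsum : Summable (fun r : ℕ => ∫ s in Ioo (0:ℝ) t, ‖F r s‖) := by
    rw [funext hnorm]
    exact (ML_summable hγ0 (|lam| * t ^ γ)).mul_left _
  -- interchange sum and integral
  have hswap := MeasureTheory.integral_tsum_of_summable_integral_norm
    (μ := volume.restrict (Ioo (0:ℝ) t)) (F := F) hint hsum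
  -- compute each integral
  have hval : ∀ r : ℕ, ∫ s in Ioo (0:ℝ) t, F r s
      = lam * Real.Gamma (1-γ) * ((lam*t^γ)^r / Real.Gamma (γ*(r:ℝ)+1)) := by
    intro r
    have : ∫ s in Ioo (0:ℝ) t, F r s
        = c r * ∫ s in Ioo (0:ℝ) t, s ^ (γ*((r:ℝ)+1)-1) * (t-s) ^ ((1-γ)-1) := by
      rw [← integral_const_mul]
      apply setIntegral_congr_fun measurableSet_Ioo
      intro s hs
      simp only [hF]
      norm_num
    rw [this, beta_value (har r) hb ht, hc]
    exact c_beta_simplify hγ0 hγ1 ht lam r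
  -- put everything together
  rw [intervalIntegral.integral_of_le ht.le, integral_Ioc_eq_integral_Ioo,
    setIntegral_congr_fun measurableSet_Ioo hpt, ← hswap, funext hval, tsum_mul_left]
  have hML : (∑' r : ℕ, (lam*t^γ)^r / Real.Gamma (γ*(r:ℝ)+1))
      = mittagLeffler γ 1 (lam*t^γ) := rfl
  rw [hML]
  field_simp

lemma caputo_affine {γ : ℝ} (hγ : γ ∈ Set.Ioo (0:ℝ) 1) (lam cc d : ℝ) {t : ℝ} (ht : 0 < t) :
    (1 / Real.Gamma (1 - γ)) * ∫ s in (0:ℝ)..t,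
      deriv (fun s' => d + cc * mittagLeffler γ 1 (lam * s' ^ γ)) s * (t - s) ^ (-γ)
    = cc * (lam * mittagLeffler γ 1 (lam * t ^ γ)) := by
  have hcongr : ∀ s ∈ uIoc (0:ℝ) t,
      deriv (fun s' => d + cc * mittagLeffler γ 1 (lam * s' ^ γ)) s * (t - s) ^ (-γ)
      = cc * (deriv (fun s' => mittagLeffler γ 1 (lam * s' ^ γ)) s * (t - s) ^ (-γ)) := by
    intro s hs
    rw [uIoc_of_le ht.le] at hs
    have hE := E_hasDerivAt hγ.1 lam hs.1
    rw [((hE.const_mul cc).const_add d).deriv, hE.deriv]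
    ring
  rw [intervalIntegral.integral_congr_ae (ae_of_all _ hcongr),
    intervalIntegral.integral_const_mul]
  calc (1 / Real.Gamma (1-γ)) * (cc * ∫ s in (0:ℝ)..t,
        deriv (fun s' => mittagLeffler γ 1 (lam * s' ^ γ)) s * (t - s) ^ (-γ))
      = cc * ((1 / Real.Gamma (1-γ)) * ∫ s in (0:ℝ)..t,
        deriv (fun s' => mittagLeffler γ 1 (lam * s' ^ γ)) s * (t - s) ^ (-γ)) := by ring
    _ = cc * (lam * mittagLeffler γ 1 (lam * t ^ γ)) := by rw [caputo_core hγ lam ht]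


/-- **Exact solution of the nonlinear time-space fractional diffusion–convection
equation** `C_t^α u = a₁ (C_x^β u)² + a₁ u C_x^β(C_x^β u) - b₂ u C_x^β u`, where
`a₁ = b₂/(2k)`, for all `x > 0`, `t > 0`. -/
theorem nonlinear_fractional_diffusion_convection_exact (α β k k₀ k₁ b₂ : ℝ)
    (hα : α ∈ Set.Ioo (0 : ℝ) 1) (hβ : β ∈ Set.Ioo (0 : ℝ) 1) (hk : k ≠ 0) :
    ∀ x : ℝ, 0 < x → ∀ t : ℝ, 0 < t →
      caputoT α (uSol α β k k₀ k₁ b₂) x t =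
        (b₂ / (2 * k)) * (caputoX β (uSol α β k k₀ k₁ b₂) x t) ^ 2
          + (b₂ / (2 * k)) * uSol α β k k₀ k₁ b₂ x t *
            caputoX β (caputoX β (uSol α β k k₀ k₁ b₂)) x t
          - b₂ * uSol α β k k₀ k₁ b₂ x t * caputoX β (uSol α β k k₀ k₁ b₂) x t := by
  intro x hx t ht
  set lamT : ℝ := -(b₂ / 2) * k * k₀ with hlamT
  set Tt : ℝ := mittagLeffler α 1 (lamT * t ^ α) with hTt
  set Xx : ℝ := mittagLeffler β 1 (k * x ^ β) with hXx
  have h1 : caputoT α (uSol α β k k₀ k₁ b₂) x t = (k₁ * Xx) * (lamT * Tt) := by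
    have hfunT : (fun s' => uSol α β k k₀ k₁ b₂ x s')
        = fun s' => k₀ + (k₁ * mittagLeffler β 1 (k * x ^ β)) *
            mittagLeffler α 1 (lamT * s' ^ α) := by
      funext s'
      simp only [uSol, hlamT]
      ring
    show (1 / Real.Gamma (1 - α)) * ∫ s in (0:ℝ)..t,
        deriv (fun s' => uSol α β k k₀ k₁ b₂ x s') s * (t - s) ^ (-α) = _
    rw [hfunT]
    exact caputo_affine hα lamT _ k₀ ht
  have h2 : ∀ y : ℝ, 0 < y → caputoX β (uSol α β k k₀ k₁ b₂) y t
      = (k₁ * Tt) * (k * mittagLeffler β 1 (k * y ^ β)) := by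
    intro y hy
    have hfunX : (fun y' => uSol α β k k₀ k₁ b₂ y' t)
        = fun y' => k₀ + (k₁ * mittagLeffler α 1 (lamT * t ^ α)) *
            mittagLeffler β 1 (k * y' ^ β) := by
      funext y'
      simp only [uSol, hlamT]
    show (1 / Real.Gamma (1 - β)) * ∫ z in (0:ℝ)..y,
        deriv (fun y' => uSol α β k k₀ k₁ b₂ y' t) z * (y - z) ^ (-β) = _
    rw [hfunX]
    exact caputo_affine hβ k _ k₀ hy
  have h3 : caputoX β (caputoX β (uSol α β k k₀ k₁ b₂)) x t
      = ((k₁ * Tt) * k) * (k * Xx) := by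
    have hfun2 : ∀ y ∈ uIoc (0:ℝ) x,
        deriv (fun y' => caputoX β (uSol α β k k₀ k₁ b₂) y' t) y * (x - y) ^ (-β)
        = deriv (fun y' => (0:ℝ) + ((k₁ * Tt) * k) * mittagLeffler β 1 (k * y' ^ β)) y
            * (x - y) ^ (-β) := by
      intro y hy
      rw [uIoc_of_le hx.le] at hy
      congr 1
      apply Filter.EventuallyEq.deriv_eq
      filter_upwards [isOpen_Ioi.mem_nhds (mem_Ioi.mpr hy.1)] with z hz
      rw [h2 z (mem_Ioi.mp hz)]
      ring
    show (1 / Real.Gamma (1 - β)) * ∫ y in (0:ℝ)..x,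
        deriv (fun y' => caputoX β (uSol α β k k₀ k₁ b₂) y' t) y * (x - y) ^ (-β) = _
    rw [intervalIntegral.integral_congr_ae (ae_of_all _ hfun2)]
    exact caputo_affine hβ k _ 0 hx
  have hu : uSol α β k k₀ k₁ b₂ x t = k₀ + k₁ * Tt * Xx := by
    simp only [uSol, hTt, hXx, hlamT]
  rw [h1, h2 x hx, h3, hu, hlamT]
  field_simp
  ring

end CaputoMLAux
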